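/- For every q ∈ (0,1), every integer ℓ ≥ 1 with N := ℓ + 1, and every m = (m₁,…,m_ℓ) ∈ ℕ^ℓ, the family indexed by n = (n₁,…,n_ℓ) ∈ ℕ^ℓ with terms ∏_{k=1}^{ℓ} (1 − q^{2k}) · q^{2(N−k)n_k} · q^{2 n_k Σ_{i=1}^{N−k} m_i} is summable, and its sum equals ∏_{k=1}^{ℓ} (1 − q^{2k})/(1 − q^{2(k + Σ_{i=1}^{k} m_i)}). -/

import Mathlib

set_option maxHeartbeats 1000000 in
lemma hasSum_pi_prod : ∀ (d : ℕ) (f : Fin d → ℕ → ℝ) (a : Fin d → ℝ),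
    (∀ k, HasSum (f k) (a k)) → (∀ k n, 0 ≤ f k n) →
    HasSum (fun v : Fin d → ℕ => ∏ k, f k (v k)) (∏ k, a k) := by
  intro d
  induction d with
  | zero =>
    intro f a _ _
    simpa using hasSum_fintype (fun v : Fin 0 → ℕ => ∏ k, f k (v k))
  | succ d ih =>
    intro f a h hpos
    have h0 : HasSum (f 0) (a 0) := h 0
    have ht : HasSum (fun v : Fin d → ℕ => ∏ k : Fin d, f k.succ (v k)) (∏ k : Fin d, a k.succ) :=
      ih (fun k : Fin d => f k.succ) (fun k : Fin d => a k.succ) (fun k => h k.succ) (fun k => hpos k.succ)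
    have hpos' : ∀ v : Fin d → ℕ, 0 ≤ ∏ k, f k.succ (v k) := fun v =>
      Finset.prod_nonneg fun k _ => hpos k.succ (v k)
    have h0' : Summable (fun n => ‖f 0 n‖) :=
      h0.summable.congr fun n => (Real.norm_of_nonneg (hpos 0 n)).symm
    have ht' : Summable (fun v : Fin d → ℕ => ‖∏ k : Fin d, f k.succ (v k)‖) :=
      ht.summable.congr fun v => (Real.norm_of_nonneg (hpos' v)).symm
    have hsum : Summable (fun x : ℕ × (Fin d → ℕ) =>
        f 0 x.1 * ∏ k : Fin d, f k.succ (x.2 k)) :=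
      summable_mul_of_summable_norm (R := ℝ) (ι := ℕ) (ι' := Fin d → ℕ)
        (f := f 0) (g := fun v => ∏ k : Fin d, f k.succ (v k)) h0' ht'
    have hmul : HasSum (fun x : ℕ × (Fin d → ℕ) => f 0 x.1 * ∏ k : Fin d, f k.succ (x.2 k))
        (a 0 * ∏ k : Fin d, a k.succ) :=
      HasSum.mul (α := ℝ) (ι := ℕ) (κ := Fin d → ℕ) (f := f 0) (g := fun v => ∏ k : Fin d, f k.succ (v k)) h0 ht hsum
    have key := ((Fin.consEquiv (fun _ : Fin (d+1) => ℕ)).symm.hasSum_iff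
      (f := fun x : ℕ × (Fin d → ℕ) => f 0 x.1 * ∏ k : Fin d, f k.succ (x.2 k))
      (a := a 0 * ∏ k : Fin d, a k.succ)).mpr hmul
    have hfe : (fun v : Fin (d+1) → ℕ => ∏ k : Fin (d+1), f k (v k))
        = fun v => f 0 (v 0) * ∏ k : Fin d, f k.succ (v k.succ) := by
      funext v; rw [Fin.prod_univ_succ]
    rw [hfe, Fin.prod_univ_succ]
    simpa [Fin.consEquiv, Function.comp_def, Fin.tail] using key

/-- For `q ∈ (0,1)`, `ℓ ≥ 1`, `N = ℓ + 1` and `m ∈ ℕ^ℓ`, the family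
indexed by `n ∈ ℕ^ℓ` with terms
`∏_{k=1}^{ℓ} (1 − q^{2k}) q^{2(N−k)n_k} q^{2 n_k Σ_{i=1}^{N−k} m_i}`
is summable with sum `∏_{k=1}^{ℓ} (1 − q^{2k})/(1 − q^{2(k + Σ_{i=1}^{k} m_i)})`.
(The indices `k`, `i` of `n` and `m` are shifted to start at `0`.) -/
theorem hasSum_haar_integrand (q : ℝ) (hq : q ∈ Set.Ioo (0 : ℝ) 1)
    (ℓ : ℕ) (hℓ : 1 ≤ ℓ) (m : Fin ℓ → ℕ) :
    HasSum
      (fun n : Fin ℓ → ℕ => ∏ k : Fin ℓ,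
        (1 - q ^ (2 * ((k : ℕ) + 1))) * q ^ (2 * (ℓ - (k : ℕ)) * n k) *
          q ^ (2 * n k *
            ∑ i ∈ Finset.univ.filter (fun i : Fin ℓ => (i : ℕ) < ℓ - (k : ℕ)), m i))
      (∏ k : Fin ℓ,
        (1 - q ^ (2 * ((k : ℕ) + 1))) /
          (1 - q ^ (2 * ((k : ℕ) + 1
              + ∑ i ∈ Finset.univ.filter (fun i : Fin ℓ => (i : ℕ) ≤ (k : ℕ)), m i)))) := by
  obtain ⟨hq0, hq1⟩ := hq
  set S : Fin ℓ → ℕ := fun k =>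
    ∑ i ∈ Finset.univ.filter (fun i : Fin ℓ => (i : ℕ) < ℓ - (k : ℕ)), m i with hS
  set f : Fin ℓ → ℕ → ℝ := fun k n =>
    (1 - q ^ (2 * ((k : ℕ) + 1))) * (q ^ (2 * (ℓ - (k : ℕ)) + 2 * S k)) ^ n with hf
  have hr : ∀ k : Fin ℓ, q ^ (2 * (ℓ - (k : ℕ)) + 2 * S k) < 1 := by
    intro k
    apply pow_lt_one₀ hq0.le hq1
    have : (k : ℕ) < ℓ := k.2
    omega
  have hrpos : ∀ k : Fin ℓ, 0 ≤ q ^ (2 * (ℓ - (k : ℕ)) + 2 * S k) := fun k =>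
    pow_nonneg hq0.le _
  have hnum : ∀ k : Fin ℓ, 0 ≤ 1 - q ^ (2 * ((k : ℕ) + 1)) := by
    intro k
    have := pow_le_one₀ hq0.le hq1.le (n := 2 * ((k : ℕ) + 1))
    linarith
  have hgeom : ∀ k : Fin ℓ, HasSum (f k)
      ((1 - q ^ (2 * ((k : ℕ) + 1))) * (1 - q ^ (2 * (ℓ - (k : ℕ)) + 2 * S k))⁻¹) := by
    intro k
    exact (hasSum_geometric_of_lt_one (hrpos k) (hr k)).mul_left _
  have hpos : ∀ (k : Fin ℓ) (n : ℕ), 0 ≤ f k n := fun k n =>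
    mul_nonneg (hnum k) (pow_nonneg (hrpos k) n)
  have hmain := hasSum_pi_prod ℓ f _ hgeom hpos
  have hfun : (fun n : Fin ℓ → ℕ => ∏ k : Fin ℓ,
        (1 - q ^ (2 * ((k : ℕ) + 1))) * q ^ (2 * (ℓ - (k : ℕ)) * n k) *
          q ^ (2 * n k *
            ∑ i ∈ Finset.univ.filter (fun i : Fin ℓ => (i : ℕ) < ℓ - (k : ℕ)), m i))
      = fun v : Fin ℓ → ℕ => ∏ k, f k (v k) := by
    funext v
    apply Finset.prod_congr rfl
    intro k _
    simp only [hf]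
    rw [← pow_mul, mul_assoc, ← pow_add]
    congr 2
    ring
  rw [hfun]
  convert hmain using 1
  simp only [div_eq_mul_inv]
  rw [Finset.prod_mul_distrib, Finset.prod_mul_distrib]
  congr 1
  have key : ∀ k : Fin ℓ, (1 - q ^ (2 * (ℓ - (k : ℕ)) + 2 * S k))⁻¹
      = (fun j : Fin ℓ => (1 - q ^ (2 * ((j : ℕ) + 1
          + ∑ i ∈ Finset.univ.filter (fun i : Fin ℓ => (i : ℕ) ≤ (j : ℕ)), m i)))⁻¹)
        (Fin.rev k) := by
    intro k
    have hk : (k : ℕ) < ℓ := k.2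
    have hrev : ((Fin.rev k : Fin ℓ) : ℕ) = ℓ - 1 - (k : ℕ) := by
      simp [Fin.val_rev]; omega
    have h1 : ((Fin.rev k : Fin ℓ) : ℕ) + 1 = ℓ - (k : ℕ) := by omega
    have h2 : (Finset.univ.filter (fun i : Fin ℓ => (i : ℕ) ≤ ((Fin.rev k : Fin ℓ) : ℕ)))
        = Finset.univ.filter (fun i : Fin ℓ => (i : ℕ) < ℓ - (k : ℕ)) := by
      apply Finset.filter_congr
      intro i _
      simp only [hrev, eq_iff_iff]
      constructor <;> (intro h; omega)
    simp only [h2, h1, hS]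
    rw [Nat.mul_add]
  rw [show (∏ k : Fin ℓ, (1 - q ^ (2 * (ℓ - (k : ℕ)) + 2 * S k))⁻¹)
      = ∏ k : Fin ℓ, (fun j : Fin ℓ => (1 - q ^ (2 * ((j : ℕ) + 1
          + ∑ i ∈ Finset.univ.filter (fun i : Fin ℓ => (i : ℕ) ≤ (j : ℕ)), m i)))⁻¹)
        (Fin.rev k) from Finset.prod_congr rfl (fun k _ => key k)]
  exact (Equiv.prod_comp Fin.revPerm (fun j : Fin ℓ => (1 - q ^ (2 * ((j : ℕ) + 1
      + ∑ i ∈ Finset.univ.filter (fun i : Fin ℓ => (i : ℕ) ≤ (j : ℕ)), m i)))⁻¹)).symm
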